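/- Let k be a field and (V, ≤) a finite partially ordered set. In the edge ring A = k[V×{1,2}]/L of the bipartite graph associated to (V, ≤), the family of elements x_{(v,1)} − x_{(v,2)}, for v ∈ V (taken in any enumeration of V), is a regular sequence in A. -/

import Mathlib

open MvPolynomial

/-- A sequence `a₁, …, aₙ` (given as a list) in a commutative ring `A` is regular
if each `aᵢ` is a nonzerodivisor in `A/(a₁,…,a_{i-1})` and all the quotient rings
`A/(a₁,…,aᵢ)`, `i = 0, …, n`, are nonzero. -/
def IsRegularSeq {A : Type*} [CommRing A] (l : List A) : Prop :=
  (∀ i : Fin l.length, ∀ b : A,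
      Ideal.Quotient.mk (Ideal.span {a | a ∈ l.take i.val}) (l.get i * b) = 0 →
      Ideal.Quotient.mk (Ideal.span {a | a ∈ l.take i.val}) b = 0) ∧
  (∀ i : ℕ, i ≤ l.length → (Ideal.span {a | a ∈ l.take i} : Ideal A) ≠ ⊤)

/-- The edge ideal of the bipartite graph associated to a poset `V`: in the
polynomial ring with variables indexed by `V ⊕ V` (`inl v` = `(v,1)`,
`inr w` = `(v,2)`), it is generated by the monomials `x_{(v,1)} x_{(w,2)}`
for `v ≤ w`. -/
noncomputable def posetEdgeIdeal (k V : Type*) [Field k] [PartialOrder V] :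
    Ideal (MvPolynomial (V ⊕ V) k) :=
  Ideal.span {p | ∃ v w : V, v ≤ w ∧ p = X (Sum.inl v) * X (Sum.inr w)}

section Aux

attribute [local instance] Classical.propDecidable

open Sum Finsupp

variable {k V : Type*} [Field k] [PartialOrder V]

/-- The merged variable: `inl w` if `w ∈ S`, otherwise `inr w`. -/
noncomputable def mergedVar (S : Set V) (w : V) : V ⊕ V :=
  if w ∈ S then Sum.inl w else Sum.inr w

/-- Exponent vectors of the generators of the merged monomial ideal. -/
def mergedGens (S : Set V) : Set ((V ⊕ V) →₀ ℕ) :=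
  {d | ∃ v w : V, v ≤ w ∧
    d = Finsupp.single (Sum.inl v) (1:ℕ) + Finsupp.single (mergedVar S w) (1:ℕ)}

/-- The merged monomial ideal. -/
noncomputable def mergedIdeal (S : Set V) (k : Type*) [Field k] :
    Ideal (MvPolynomial (V ⊕ V) k) :=
  Ideal.span ((fun d => monomial d (1 : k)) '' mergedGens S)

lemma pair_le {α β : V ⊕ V} (hab : α ≠ β) {n : (V ⊕ V) →₀ ℕ}
    (h1 : 1 ≤ n α) (h2 : 1 ≤ n β) :
    Finsupp.single α (1:ℕ) + Finsupp.single β (1:ℕ) ≤ n := by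
  rw [Finsupp.le_def]
  intro x
  rcases eq_or_ne x α with rfl | hxa
  · simpa [Finsupp.single_apply, hab.symm] using h1
  · rcases eq_or_ne x β with rfl | hxb
    · simpa [Finsupp.single_apply, hxa.symm] using h2
    · simp [Finsupp.single_apply, hxa.symm, hxb.symm]

/-- The core combinatorial lemma: multiplication by `x_{(u,1)} - x_{(u,2)}` is
injective modulo the merged monomial ideal, when `u ∉ S`. -/
lemma mergedIdeal_regular (S : Set V) (u : V) (hu : u ∉ S)
    (h : MvPolynomial (V ⊕ V) k)
    (hh : (X (Sum.inl u) - X (Sum.inr u)) * h ∈ mergedIdeal S k) :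
    h ∈ mergedIdeal S k := by
  classical
  rw [mergedIdeal, mem_ideal_span_monomial_image] at hh ⊢
  intro m hm
  by_contra hstd
  push_neg at hstd
  have hcm : coeff m h ≠ 0 := MvPolynomial.mem_support_iff.mp hm
  have happ : ∀ (n : (V ⊕ V) →₀ ℕ) (x y : V ⊕ V),
      (n + Finsupp.single x (1:ℕ)) y = n y + (if x = y then 1 else 0) := by
    intro n x y
    rw [Finsupp.add_apply, Finsupp.single_apply]
  have gapp : ∀ α β y : V ⊕ V,
      ((Finsupp.single α (1:ℕ) + Finsupp.single β (1:ℕ) : (V ⊕ V) →₀ ℕ)) y =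
        (if α = y then 1 else 0) + (if β = y then 1 else 0) := by
    intro α β y
    rw [Finsupp.add_apply, Finsupp.single_apply, Finsupp.single_apply]
  -- a standard exponent cannot have both coordinates `inl u`, `inr u` positive
  have hnotboth : ∀ n : (V ⊕ V) →₀ ℕ, (∀ d ∈ mergedGens S, ¬ d ≤ n) →
      n (Sum.inl u) = 0 ∨ n (Sum.inr u) = 0 := by
    intro n hn
    by_contra hc
    push_neg at hc
    have hmem : (Finsupp.single (Sum.inl u : V ⊕ V) (1:ℕ) + Finsupp.single (mergedVar S u) (1:ℕ))
        ∈ mergedGens S := ⟨u, u, le_refl u, rfl⟩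
    rw [mergedVar, if_neg hu] at hmem
    exact hn _ hmem (pair_le (by simp) (Nat.one_le_iff_ne_zero.mpr hc.1)
      (Nat.one_le_iff_ne_zero.mpr hc.2))
  -- extraction lemma
  have extract : ∀ (x : V ⊕ V) (d : (V ⊕ V) →₀ ℕ), ¬ d ≤ m →
      d ≤ m + Finsupp.single x (1:ℕ) → 1 ≤ d x ∧ ∀ y, y ≠ x → d y ≤ m y := by
    intro x d hdm hdle
    rw [Finsupp.le_def] at hdm hdle
    push_neg at hdm
    obtain ⟨y, hy⟩ := hdm
    have h1 : ∀ z, z ≠ x → d z ≤ m z := by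
      intro z hz
      have h2 := hdle z
      rw [happ m x z, if_neg (Ne.symm hz), add_zero] at h2
      exact h2
    have hyx : y = x := by
      by_contra hyx
      exact absurd (h1 y hyx) (not_le.mpr hy)
    subst hyx
    have h3 := hdle y
    rw [happ m y y, if_pos rfl] at h3
    exact ⟨by omega, h1⟩
  -- structure of generators dominating m + e_{inl u}
  have structA : ∀ d ∈ mergedGens S, ¬ d ≤ m → d ≤ m + Finsupp.single (Sum.inl u : V ⊕ V) (1:ℕ) →
      ∃ w : V, u ≤ w ∧ Sum.inl u ≠ mergedVar S w ∧ 1 ≤ m (mergedVar S w) := by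
    rintro d ⟨v, w, hvw, rfl⟩ hdm hdle
    obtain ⟨hda, hrest⟩ := extract _ _ hdm hdle
    have hwa : Sum.inl u ≠ mergedVar S w := by
      rw [mergedVar]
      by_cases hwS : w ∈ S
      · rw [if_pos hwS]
        intro hq
        rw [Sum.inl.injEq] at hq
        exact hu (hq ▸ hwS)
      · rw [if_neg hwS]
        simp
    have hva : (Sum.inl v : V ⊕ V) = Sum.inl u := by
      by_contra hva
      rw [gapp, if_neg hva, if_neg (Ne.symm hwa)] at hda
      omega
    rw [Sum.inl.injEq] at hva
    refine ⟨w, hva ▸ hvw, hwa, ?_⟩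
    have h4 := hrest (mergedVar S w) (Ne.symm hwa)
    rw [gapp] at h4
    rw [if_pos rfl] at h4
    omega
  -- structure of generators dominating m + e_{inr u}
  have structB : ∀ d ∈ mergedGens S, ¬ d ≤ m → d ≤ m + Finsupp.single (Sum.inr u : V ⊕ V) (1:ℕ) →
      ∃ v : V, v ≤ u ∧ 1 ≤ m (Sum.inl v) := by
    rintro d ⟨v, w, hvw, rfl⟩ hdm hdle
    obtain ⟨hdb, hrest⟩ := extract _ _ hdm hdle
    have hvb : (Sum.inl v : V ⊕ V) ≠ Sum.inr u := by simp
    have hwb : mergedVar S w = Sum.inr u := by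
      by_contra hwb
      rw [gapp, if_neg hvb, if_neg hwb] at hdb
      omega
    have hwu : w = u := by
      rw [mergedVar] at hwb
      by_cases hwS : w ∈ S
      · rw [if_pos hwS] at hwb
        exact absurd hwb (by simp)
      · rw [if_neg hwS] at hwb
        rwa [Sum.inr.injEq] at hwb
    refine ⟨v, hwu ▸ hvw, ?_⟩
    have h4 := hrest (Sum.inl v) hvb
    rw [gapp, if_pos rfl] at h4
    omega
  -- coefficient computations
  have coeffcomp : ∀ x : V ⊕ V,
      coeff (m + Finsupp.single x (1:ℕ)) (X x * h) = coeff m h := by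
    intro x
    rw [coeff_X_mul']
    rw [if_pos (Finsupp.mem_support_iff.mpr (by rw [happ, if_pos rfl]; omega))]
    rw [add_tsub_cancel_right]
  have coeffzero : ∀ x y : V ⊕ V, (m + Finsupp.single x (1:ℕ)) y = 0 →
      coeff (m + Finsupp.single x (1:ℕ)) (X y * h) = 0 := by
    intro x y hy
    rw [coeff_X_mul', if_neg (by rw [Finsupp.mem_support_iff]; simpa using hy)]
  -- main case analysis
  by_cases hA : ∀ d ∈ mergedGens S, ¬ d ≤ m + Finsupp.single (Sum.inl u : V ⊕ V) (1:ℕ)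
  · -- m + e_{inl u} is standard: it appears in the support of the product
    have hna : (m + Finsupp.single (Sum.inl u : V ⊕ V) (1:ℕ)) (Sum.inl u) ≠ 0 := by
      rw [happ, if_pos rfl]; omega
    have hnb : (m + Finsupp.single (Sum.inl u : V ⊕ V) (1:ℕ)) (Sum.inr u) = 0 := by
      rcases hnotboth _ hA with h0 | h0
      · exact absurd h0 hna
      · exact h0
    have hco : coeff (m + Finsupp.single (Sum.inl u : V ⊕ V) (1:ℕ))
        ((X (Sum.inl u) - X (Sum.inr u)) * h) = coeff m h := by
      rw [sub_mul, coeff_sub, coeffcomp, coeffzero _ _ hnb, sub_zero]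
    obtain ⟨d, hd, hdle⟩ := hh _ (MvPolynomial.mem_support_iff.mpr
      (by rw [hco]; exact hcm))
    exact hA d hd hdle
  · push_neg at hA
    obtain ⟨d1, hd1, hd1le⟩ := hA
    obtain ⟨w, huw, hwa, hmw⟩ := structA d1 hd1 (hstd d1 hd1) hd1le
    by_cases hB : ∀ d ∈ mergedGens S, ¬ d ≤ m + Finsupp.single (Sum.inr u : V ⊕ V) (1:ℕ)
    · -- m + e_{inr u} is standard: it appears in the support of the product
      have hnb : (m + Finsupp.single (Sum.inr u : V ⊕ V) (1:ℕ)) (Sum.inr u) ≠ 0 := by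
        rw [happ, if_pos rfl]; omega
      have hna : (m + Finsupp.single (Sum.inr u : V ⊕ V) (1:ℕ)) (Sum.inl u) = 0 := by
        rcases hnotboth _ hB with h0 | h0
        · exact h0
        · exact absurd h0 hnb
      have hco : coeff (m + Finsupp.single (Sum.inr u : V ⊕ V) (1:ℕ))
          ((X (Sum.inl u) - X (Sum.inr u)) * h) = -(coeff m h) := by
        rw [sub_mul, coeff_sub, coeffcomp, coeffzero _ _ hna, zero_sub]
      obtain ⟨d, hd, hdle⟩ := hh _ (MvPolynomial.mem_support_iff.mpr
        (by rw [hco]; exact neg_ne_zero.mpr hcm))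
      exact hB d hd hdle
    · push_neg at hB
      obtain ⟨d2, hd2, hd2le⟩ := hB
      obtain ⟨v, hvu, hmv⟩ := structB d2 hd2 (hstd d2 hd2) hd2le
      have hne : (Sum.inl v : V ⊕ V) ≠ mergedVar S w := by
        rw [mergedVar]
        by_cases hwS : w ∈ S
        · rw [if_pos hwS]
          intro h'
          rw [Sum.inl.injEq] at h'
          subst h'
          exact hu (le_antisymm hvu huw ▸ hwS)
        · rw [if_neg hwS]
          simp
      exact hstd _ ⟨v, w, hvu.trans huw, rfl⟩ (pair_le hne hmv hmw)

/-- The ideal generated by the differences `x_{(v,1)} - x_{(v,2)}`, `v ∈ S`. -/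
noncomputable def thetaIdeal (S : Set V) (k : Type*) [Field k] :
    Ideal (MvPolynomial (V ⊕ V) k) :=
  Ideal.span ((fun v => (X (Sum.inl v) - X (Sum.inr v) : MvPolynomial (V ⊕ V) k)) '' S)

/-- The merging substitution `x_{(v,2)} ↦ x_{(v,1)}` for `v ∈ S`. -/
noncomputable def mergeHom (S : Set V) (k : Type*) [Field k] :
    MvPolynomial (V ⊕ V) k →ₐ[k] MvPolynomial (V ⊕ V) k :=
  aeval (fun x : V ⊕ V => match x with
    | Sum.inl v => X (Sum.inl v)
    | Sum.inr v => if v ∈ S then X (Sum.inl v) else X (Sum.inr v))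

lemma mergeHom_X_inl (S : Set V) (k : Type*) [Field k] (v : V) :
    mergeHom S k (X (Sum.inl v)) = X (Sum.inl v) :=
  aeval_X _ _

lemma mergeHom_X_inr (S : Set V) (k : Type*) [Field k] (v : V) :
    mergeHom S k (X (Sum.inr v)) = if v ∈ S then X (Sum.inl v) else X (Sum.inr v) :=
  aeval_X _ _

lemma sub_mergeHom_mem (S : Set V) (k : Type*) [Field k] (f : MvPolynomial (V ⊕ V) k) :
    f - mergeHom S k f ∈ thetaIdeal S k := by
  induction f using MvPolynomial.induction_on with
  | C a =>
      have h1 : mergeHom S k (C a) = C a := by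
        simp [mergeHom, algHom_C]
      rw [h1, sub_self]
      exact zero_mem _
  | add p q hp hq =>
      have h1 : p + q - mergeHom S k (p + q) =
          (p - mergeHom S k p) + (q - mergeHom S k q) := by
        rw [map_add]; ring
      rw [h1]
      exact add_mem hp hq
  | mul_X p n hp =>
      have hX : X n - mergeHom S k (X n) ∈ thetaIdeal S k := by
        cases n with
        | inl v =>
            rw [mergeHom_X_inl, sub_self]
            exact zero_mem _
        | inr v =>
            rw [mergeHom_X_inr]
            by_cases hv : v ∈ S
            · rw [if_pos hv]
              have h2 : X (Sum.inr v) - X (Sum.inl v) =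
                  -((X (Sum.inl v) - X (Sum.inr v) : MvPolynomial (V ⊕ V) k)) := by ring
              rw [h2]
              exact neg_mem (Ideal.subset_span ⟨v, hv, rfl⟩)
            · rw [if_neg hv, sub_self]
              exact zero_mem _
      have h1 : p * X n - mergeHom S k (p * X n) =
          (p - mergeHom S k p) * X n + mergeHom S k p * (X n - mergeHom S k (X n)) := by
        rw [map_mul]; ring
      rw [h1]
      exact add_mem (Ideal.mul_mem_right _ _ hp) (Ideal.mul_mem_left _ _ hX)

lemma mergeHom_theta (S : Set V) (k : Type*) [Field k] {v : V} (hv : v ∈ S) :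
    mergeHom S k (X (Sum.inl v) - X (Sum.inr v)) = 0 := by
  rw [map_sub, mergeHom_X_inl, mergeHom_X_inr, if_pos hv, sub_self]

lemma map_sup_le_merged (S : Set V) (k : Type*) [Field k] :
    Ideal.map (mergeHom S k) (posetEdgeIdeal k V ⊔ thetaIdeal S k) ≤ mergedIdeal S k := by
  rw [Ideal.map_sup]
  apply sup_le
  · rw [posetEdgeIdeal, Ideal.map_span, Ideal.span_le]
    rintro p ⟨q, ⟨v, w, hvw, rfl⟩, rfl⟩
    show mergeHom S k (X (Sum.inl v) * X (Sum.inr w)) ∈ mergedIdeal S k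
    have hX : (X (mergedVar S w) : MvPolynomial (V ⊕ V) k) =
        if w ∈ S then X (Sum.inl w) else X (Sum.inr w) := by
      rw [mergedVar, apply_ite (X : V ⊕ V → MvPolynomial (V ⊕ V) k)]
    rw [map_mul, mergeHom_X_inl, mergeHom_X_inr, ← hX, X, X, monomial_mul, one_mul]
    exact Ideal.subset_span ⟨_, ⟨v, w, hvw, rfl⟩, rfl⟩
  · rw [thetaIdeal, Ideal.map_span, Ideal.span_le]
    rintro p ⟨q, ⟨v, hv, rfl⟩, rfl⟩
    show mergeHom S k (X (Sum.inl v) - X (Sum.inr v)) ∈ mergedIdeal S k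
    rw [mergeHom_theta S k hv]
    exact zero_mem _

lemma merged_le_sup (S : Set V) (k : Type*) [Field k] :
    mergedIdeal S k ≤ posetEdgeIdeal k V ⊔ thetaIdeal S k := by
  rw [mergedIdeal, Ideal.span_le]
  rintro p ⟨d, ⟨v, w, hvw, rfl⟩, rfl⟩
  show (monomial (Finsupp.single (Sum.inl v) (1:ℕ) + Finsupp.single (mergedVar S w) (1:ℕ))
    (1:k)) ∈ posetEdgeIdeal k V ⊔ thetaIdeal S k
  have h1 : (monomial (Finsupp.single (Sum.inl v) (1:ℕ) + Finsupp.single (mergedVar S w) (1:ℕ))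
      (1:k)) = X (Sum.inl v) * X (mergedVar S w) := by
    rw [X, X, monomial_mul, one_mul]
  have h2 : (X (Sum.inl v) * X (mergedVar S w) : MvPolynomial (V ⊕ V) k) =
      X (Sum.inl v) * X (Sum.inr w) +
        X (Sum.inl v) * (X (mergedVar S w) - X (Sum.inr w)) := by ring
  rw [h1, h2]
  apply add_mem
  · exact Ideal.mem_sup_left (Ideal.subset_span ⟨v, w, hvw, rfl⟩)
  · apply Ideal.mem_sup_right
    apply Ideal.mul_mem_left
    rw [mergedVar]
    by_cases hw : w ∈ S
    · rw [if_pos hw]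
      exact Ideal.subset_span ⟨w, hw, rfl⟩
    · rw [if_neg hw, sub_self]
      exact zero_mem _

/-- The key regularity step in the polynomial ring. -/
lemma key_step (S : Set V) (k : Type*) [Field k] (u : V) (hu : u ∉ S)
    (f : MvPolynomial (V ⊕ V) k)
    (hf : (X (Sum.inl u) - X (Sum.inr u)) * f ∈ posetEdgeIdeal k V ⊔ thetaIdeal S k) :
    f ∈ posetEdgeIdeal k V ⊔ thetaIdeal S k := by
  have h1 : mergeHom S k ((X (Sum.inl u) - X (Sum.inr u)) * f) ∈ mergedIdeal S k :=
    map_sup_le_merged S k (Ideal.mem_map_of_mem _ hf)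
  rw [map_mul, map_sub, mergeHom_X_inl, mergeHom_X_inr, if_neg hu] at h1
  have h2 := mergedIdeal_regular S u hu _ h1
  have h3 : mergeHom S k f ∈ posetEdgeIdeal k V ⊔ thetaIdeal S k := merged_le_sup S k h2
  have h4 := sub_mergeHom_mem S k f
  have h5 : f = mergeHom S k f + (f - mergeHom S k f) := by ring
  rw [h5]
  exact add_mem h3 (Ideal.mem_sup_right h4)

lemma sup_ne_top (S : Set V) (k : Type*) [Field k] :
    posetEdgeIdeal k V ⊔ thetaIdeal S k ≠ ⊤ := by
  intro htop
  have h1 : posetEdgeIdeal k V ⊔ thetaIdeal S k ≤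
      RingHom.ker (constantCoeff : MvPolynomial (V ⊕ V) k →+* k) := by
    apply sup_le
    · rw [posetEdgeIdeal, Ideal.span_le]
      rintro p ⟨v, w, hvw, rfl⟩
      simp [RingHom.mem_ker]
    · rw [thetaIdeal, Ideal.span_le]
      rintro p ⟨v, hv, rfl⟩
      simp [RingHom.mem_ker]
  have h2 : (1 : MvPolynomial (V ⊕ V) k) ∈ posetEdgeIdeal k V ⊔ thetaIdeal S k := by
    rw [htop]; trivial
  have h3 := h1 h2
  rw [RingHom.mem_ker, map_one] at h3
  exact one_ne_zero h3

end Aux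

/-- In the edge ring `k[V×{1,2}]/L` of the bipartite graph of a finite poset
`(V, ≤)`, the elements `x_{(v,1)} − x_{(v,2)}`, `v ∈ V`, taken in any
enumeration of `V`, form a regular sequence. -/
theorem poset_edge_ring_regular_sequence
    {k V : Type*} [Field k] [Fintype V] [PartialOrder V]
    (l : List V) (hnodup : l.Nodup) (hall : ∀ v : V, v ∈ l) :
    IsRegularSeq (l.map fun v =>
      Ideal.Quotient.mk (posetEdgeIdeal k V) (X (Sum.inl v) - X (Sum.inr v))) := by
  classical
  set L := posetEdgeIdeal k V with hL
  set θ : V → MvPolynomial (V ⊕ V) k := fun v => X (Sum.inl v) - X (Sum.inr v) with hθ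
  have hspan : ∀ i : ℕ,
      Ideal.span {a | a ∈ (l.map fun v => Ideal.Quotient.mk L (θ v)).take i} =
        Ideal.map (Ideal.Quotient.mk L) (thetaIdeal {v | v ∈ l.take i} k) := by
    intro i
    rw [thetaIdeal, Ideal.map_span]
    congr 1
    ext p
    simp only [Set.mem_setOf_eq, ← List.map_take, List.mem_map, Set.mem_image]
    constructor
    · rintro ⟨v, hv, rfl⟩
      exact ⟨θ v, ⟨v, hv, rfl⟩, rfl⟩
    · rintro ⟨q, ⟨v, hv, rfl⟩, rfl⟩
      exact ⟨v, hv, rfl⟩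
  constructor
  · intro i b hb
    have hi' : i.val < l.length := i.2.trans_eq (List.length_map _)
    obtain ⟨f, rfl⟩ := Ideal.Quotient.mk_surjective b
    have hget : (l.map fun v => Ideal.Quotient.mk L (θ v)).get i =
        Ideal.Quotient.mk L (θ (l[i.val]'hi')) := by
      simp [List.get_eq_getElem, List.getElem_map]
    set u : V := l[i.val]'hi' with hud
    have hu : u ∉ ({v | v ∈ l.take i.val} : Set V) := by
      intro hmem
      have hd := List.take_append_drop i.val l
      have hn := hnodup
      rw [← hd] at hn
      have hdisj := (List.nodup_append.mp hn).2.2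
      have hu' : u ∈ l.drop i.val := by
        have h0 : (l.drop i.val)[0]'(by simp; omega) = l[i.val]'hi' := by
          rw [List.getElem_drop]
          norm_num
        rw [hud, ← h0]
        exact List.getElem_mem _
      exact hdisj u hmem u hu' rfl
    rw [Ideal.Quotient.eq_zero_iff_mem, hspan, hget, ← map_mul (Ideal.Quotient.mk L),
      Ideal.mem_quotient_iff_mem_sup] at hb
    rw [Ideal.Quotient.eq_zero_iff_mem, hspan, Ideal.mem_quotient_iff_mem_sup]
    rw [sup_comm] at hb ⊢
    exact key_step _ k u hu f hb
  · intro i _ htop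
    have h1 : (1 : MvPolynomial (V ⊕ V) k ⧸ L) ∈
        Ideal.span {a | a ∈ (l.map fun v => Ideal.Quotient.mk L (θ v)).take i} := by
      rw [htop]; trivial
    rw [hspan, ← map_one (Ideal.Quotient.mk L), Ideal.mem_quotient_iff_mem_sup] at h1
    refine sup_ne_top {v | v ∈ l.take i} k ?_
    rw [Ideal.eq_top_iff_one, sup_comm]
    exact h1
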